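/- Let x : [0, T] → ℝⁿ solve x'(t) = f(x(t), y(t)) where y(t) = x(t−τ) for t > τ and y(t) = x₀(t−τ) for t ≤ τ, and let δx solve the linear variational equation δx'(t) = Df_x(x(t), y(t))·δx(t) + Df_y(x(t), y(t))·δx(t−τ)·𝟙_{t>τ} with δx = 0 on [−τ, 0] (more generally, the linearization along x). Let p : [0, T] → (ℝⁿ)* solve the adjoint equation p'(t) = −p(t)·Df_x(x(t), y(t)) − p(t+τ)·Df_y(x(t+τ), x(t))·𝟙_{t < T−τ}, with p(t) = 0 for t > T. Then the pairing t ↦ p(t)·δx(t) + ∫_{t−τ}^{t} p(s+τ)·Df_y(x(s+τ), x(s))·δx(s)·𝟙_{s < T−τ} ds is constant on [τ, T]. -/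

import Mathlib

open Set RealInnerProductSpace

/-- Duality between the variational and adjoint flows of a DDE: the pairing
`t ↦ ⟪p(t), δx(t)⟫ + ∫_{t-τ}^{t} ⟪p(s+τ), Df_y(x(s+τ), x(s)) δx(s)⟫ 𝟙_{s<T-τ} ds`
is constant on `[τ, T]`. -/
theorem dde_adjoint_variational_pairing_constant {n : ℕ}
    (f : EuclideanSpace ℝ (Fin n) → EuclideanSpace ℝ (Fin n) → EuclideanSpace ℝ (Fin n))
    (hf : ContDiff ℝ 1 (Function.uncurry f))
    (τ T : ℝ) (hτ : 0 < τ) (hT : τ < T)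
    (x₀ x y δx p : ℝ → EuclideanSpace ℝ (Fin n))
    (hy : ∀ t, y t = if τ < t then x (t - τ) else x₀ (t - τ))
    (hx : ∀ t ∈ Icc (0:ℝ) T, HasDerivAt x (f (x t) (y t)) t)
    (hδ0 : ∀ t ∈ Icc (-τ) (0:ℝ), δx t = 0)
    (hδ : ∀ t ∈ Icc (0:ℝ) T, HasDerivAt δx
      ((fderiv ℝ (fun u => f u (y t)) (x t)) (δx t) +
        (if τ < t then (fderiv ℝ (fun v => f (x t) v) (y t)) (δx (t - τ)) else 0)) t)
    (hp0 : ∀ t, T < t → p t = 0)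
    (hp : ∀ t ∈ Icc (0:ℝ) T, HasDerivAt p
      (-(ContinuousLinearMap.adjoint (fderiv ℝ (fun u => f u (y t)) (x t))) (p t) -
        (if t < T - τ then
          (ContinuousLinearMap.adjoint (fderiv ℝ (fun v => f (x (t + τ)) v) (x t))) (p (t + τ))
        else 0)) t) :
    ∀ t₁ ∈ Icc τ T, ∀ t₂ ∈ Icc τ T,
      (⟪p t₁, δx t₁⟫ + ∫ s in (t₁ - τ)..t₁,
          (if s < T - τ then
            ⟪p (s + τ), (fderiv ℝ (fun v => f (x (s + τ)) v) (x s)) (δx s)⟫ else 0)) =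
      (⟪p t₂, δx t₂⟫ + ∫ s in (t₂ - τ)..t₂,
          (if s < T - τ then
            ⟪p (s + τ), (fderiv ℝ (fun v => f (x (s + τ)) v) (x s)) (δx s)⟫ else 0)) := by
  intro t₁ ht₁ t₂ ht₂
  have hTτ : 0 < T - τ := sub_pos.mpr hT
  have hδx0 : δx 0 = 0 := hδ0 0 ⟨neg_nonpos.mpr hτ.le, le_refl 0⟩
  -- continuity of p everywhere on [0, ∞)
  have hpc : ∀ t : ℝ, 0 ≤ t → ContinuousAt p t := by
    intro t ht
    rcases le_or_gt t T with h | h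
    · exact (hp t ⟨ht, h⟩).continuousAt
    · have he : ∀ᶠ u in nhds t, p u = 0 := by
        filter_upwards [Ioi_mem_nhds h] with u hu using hp0 u hu
      exact (continuousAt_congr he).mpr continuousAt_const
  have hpT : p T = 0 := by
    have h1 : Filter.Tendsto p (nhdsWithin T (Ioi T)) (nhds (p T)) :=
      (hp T ⟨(hτ.trans hT).le, le_refl T⟩).continuousAt.continuousWithinAt
    have h2 : Filter.Tendsto p (nhdsWithin T (Ioi T)) (nhds 0) := by
      apply Filter.Tendsto.congr' _ tendsto_const_nhds
      filter_upwards [self_mem_nhdsWithin] with u hu using (hp0 u hu).symm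
    exact tendsto_nhds_unique h1 h2
  -- partial derivative as composition of the full derivative
  have hB : ∀ a b : EuclideanSpace ℝ (Fin n), fderiv ℝ (fun v => f a v) b
      = (fderiv ℝ (Function.uncurry f) (a, b)).comp
          (ContinuousLinearMap.inr ℝ (EuclideanSpace ℝ (Fin n)) (EuclideanSpace ℝ (Fin n))) := by
    intro a b
    have hd : HasFDerivAt (Function.uncurry f) (fderiv ℝ (Function.uncurry f) (a, b)) (a, b) :=
      (hf.differentiable one_ne_zero (a, b)).hasFDerivAt
    exact (hd.comp b (hasFDerivAt_prodMk_right a b)).fderiv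
  -- the integrand
  set h : ℝ → ℝ := fun s => if s < T - τ then
      ⟪p (s + τ), (fderiv ℝ (fun v => f (x (s + τ)) v) (x s)) (δx s)⟫ else 0 with hh_def
  set g : ℝ → ℝ := fun s =>
      ⟪p (s + τ), (fderiv ℝ (fun v => f (x (s + τ)) v) (x s)) (δx s)⟫ with hg_def
  -- continuity of g on [0, T - τ]
  have hgc : ∀ s : ℝ, 0 ≤ s → s + τ ≤ T → ContinuousAt g s := by
    intro s hs hsT
    have hx1 : ContinuousAt x s := (hx s ⟨hs, by linarith⟩).continuousAt
    have hx2 : ContinuousAt x (s + τ) := (hx (s + τ) ⟨by linarith, hsT⟩).continuousAt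
    have hδc : ContinuousAt δx s := (hδ s ⟨hs, by linarith⟩).continuousAt
    have hpc' : ContinuousAt p (s + τ) := hpc (s + τ) (by linarith)
    have hplus : Filter.Tendsto (fun u : ℝ => u + τ) (nhds s) (nhds (s + τ)) := by
      simpa using (continuous_add_right τ).tendsto s
    have hDf : Continuous (fderiv ℝ (Function.uncurry f)) := hf.continuous_fderiv one_ne_zero
    have hx2' : ContinuousAt (fun u : ℝ => x (u + τ)) s := hx2.tendsto.comp hplus
    have hxx : ContinuousAt (fun u : ℝ => (x (u + τ), x u)) s := hx2'.prodMk hx1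
    have hDfc : ContinuousAt
        (fun u : ℝ => fderiv ℝ (Function.uncurry f) (x (u + τ), x u)) s :=
      (hDf.tendsto (x (s + τ), x s)).comp hxx
    have hvv : ContinuousAt
        (fun u : ℝ => ((0 : EuclideanSpace ℝ (Fin n)), δx u)) s :=
      continuousAt_const.prodMk hδc
    have happ : ContinuousAt (fun u : ℝ =>
        (fderiv ℝ (Function.uncurry f) (x (u + τ), x u))
          ((0 : EuclideanSpace ℝ (Fin n)), δx u)) s :=
      (isBoundedBilinearMap_apply.continuous.tendsto _).comp (hDfc.prodMk hvv)
    have hpτ : ContinuousAt (fun u : ℝ => p (u + τ)) s := hpc'.tendsto.comp hplus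
    have hfin : ContinuousAt (fun u : ℝ =>
        ⟪p (u + τ), (fderiv ℝ (Function.uncurry f) (x (u + τ), x u))
          ((0 : EuclideanSpace ℝ (Fin n)), δx u)⟫) s := hpτ.inner happ
    apply hfin.congr
    filter_upwards with u
    rw [hg_def]
    dsimp only
    rw [hB (x (u + τ)) (x u)]
    simp
  -- continuity of h on (-τ, ∞)
  have hhc : ∀ s : ℝ, -τ < s → ContinuousAt h s := by
    intro s hs
    rcases lt_trichotomy s (T - τ) with hlt | heq | hgt
    · rcases lt_or_ge s 0 with hneg | hpos
      · have he : ∀ᶠ u in nhds s, h u = 0 := by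
          filter_upwards [Ioo_mem_nhds hs hneg] with u hu
          have hδu : δx u = 0 := hδ0 u ⟨hu.1.le, hu.2.le⟩
          simp [hh_def, hδu]
        exact (continuousAt_congr he).mpr continuousAt_const
      · have he : ∀ᶠ u in nhds s, h u = g u := by
          filter_upwards [Iio_mem_nhds hlt] with u hu
          rw [hh_def]
          exact if_pos hu
        exact (continuousAt_congr he).mpr (hgc s hpos (by linarith))
    · subst heq
      have hg0 : g (T - τ) = 0 := by
        rw [hg_def]; simp [sub_add_cancel, hpT]
      have hgc' : Filter.Tendsto g (nhds (T - τ)) (nhds 0) := by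
        have := hgc (T - τ) (by linarith) (by linarith)
        rwa [ContinuousAt, hg0] at this
      have hh0 : h (T - τ) = 0 := by simp [hh_def]
      rw [ContinuousAt, hh0]
      apply squeeze_zero_norm (a := fun u => ‖g u‖)
      · intro u
        by_cases hu : u < T - τ <;> simp [hh_def, hg_def, hu]
      · simpa using hgc'.norm
    · have he : ∀ᶠ u in nhds s, h u = 0 := by
        filter_upwards [Ioi_mem_nhds hgt] with u hu
        simp [hh_def, not_lt.mpr (le_of_lt (mem_Ioi.mp hu))]
      exact (continuousAt_congr he).mpr continuousAt_const
  have hhcon : ContinuousOn h (Ioi (-τ)) := fun s hs => (hhc s hs).continuousWithinAt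
  have hmeas : ∀ s ∈ Ioi (-τ), StronglyMeasurableAtFilter h (nhds s) :=
    hhcon.stronglyMeasurableAtFilter isOpen_Ioi
  have hInt : ∀ a b : ℝ, -τ < a → -τ < b →
      IntervalIntegrable h MeasureTheory.volume a b := by
    intro a b ha hb
    apply (hhcon.mono ?_).intervalIntegrable
    intro u hu
    exact lt_of_lt_of_le (lt_min ha hb) hu.1
  set H : ℝ → ℝ := fun u => ∫ s in (0:ℝ)..u, h s with hH_def
  have hHd : ∀ u : ℝ, 0 ≤ u → u ≤ T → HasDerivAt H (h u) u := by
    intro u h0 hu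
    exact intervalIntegral.integral_hasDerivAt_right (hInt 0 u (by linarith) (by linarith))
      (hmeas u (by simpa using by linarith)) (hhc u (by linarith))
  set F : ℝ → ℝ := fun u => ⟪p u, δx u⟫ + (H u - H (u - τ)) with hF_def
  -- F has zero derivative on [τ, T]
  have hFd : ∀ t ∈ Icc τ T, HasDerivAt F 0 t := by
    intro t ht
    obtain ⟨htτ, htT⟩ := ht
    have h0t : 0 ≤ t := hτ.le.trans htτ
    have hmem : t ∈ Icc (0:ℝ) T := ⟨h0t, htT⟩
    have hP := HasDerivAt.inner ℝ (hp t hmem) (hδ t hmem)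
    have hH1 : HasDerivAt H (h t) t := hHd t h0t htT
    have hH2 : HasDerivAt (fun u => H (u - τ)) (h (t - τ)) t := by
      have := (hHd (t - τ) (by linarith) (by linarith)).comp t
        ((hasDerivAt_id t).sub_const τ)
      simpa [Function.comp_def] using this
    have hFt := hP.add (hH1.sub hH2)
    have key : (⟪p t,
          (fderiv ℝ (fun u => f u (y t)) (x t)) (δx t) +
            (if τ < t then (fderiv ℝ (fun v => f (x t) v) (y t)) (δx (t - τ)) else 0)⟫ +
        ⟪-(ContinuousLinearMap.adjoint (fderiv ℝ (fun u => f u (y t)) (x t))) (p t) -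
            (if t < T - τ then
              (ContinuousLinearMap.adjoint
                (fderiv ℝ (fun v => f (x (t + τ)) v) (x t))) (p (t + τ))
            else 0), δx t⟫) + (h t - h (t - τ)) = 0 := by
      have hht : h t = if t < T - τ then ⟪p (t + τ),
          (fderiv ℝ (fun v => f (x (t + τ)) v) (x t)) (δx t)⟫ else 0 := rfl
      have hhtτ : h (t - τ) = if t < T then ⟪p t,
          (fderiv ℝ (fun v => f (x t) v) (x (t - τ))) (δx (t - τ))⟫ else 0 := by
        rw [hh_def]
        simp only [sub_add_cancel, sub_lt_sub_iff_right]
      rw [hht, hhtτ, inner_add_right, inner_sub_left, inner_neg_left,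
        ContinuousLinearMap.adjoint_inner_left]
      have hite1 : ⟪p t, (if τ < t then (fderiv ℝ (fun v => f (x t) v) (y t)) (δx (t - τ))
          else 0)⟫ = if τ < t then
            ⟪p t, (fderiv ℝ (fun v => f (x t) v) (y t)) (δx (t - τ))⟫ else 0 := by
        split_ifs <;> simp
      have hite2 : ⟪(if t < T - τ then
            (ContinuousLinearMap.adjoint
              (fderiv ℝ (fun v => f (x (t + τ)) v) (x t))) (p (t + τ)) else 0), δx t⟫
          = if t < T - τ then
              ⟪p (t + τ), (fderiv ℝ (fun v => f (x (t + τ)) v) (x t)) (δx t)⟫ else 0 := by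
        split_ifs <;> simp [ContinuousLinearMap.adjoint_inner_left]
      rw [hite1, hite2]
      rcases lt_or_eq_of_le htτ with hlt | heq
      · rcases lt_or_eq_of_le htT with hlt' | heq'
        · have hyx : y t = x (t - τ) := by rw [hy t, if_pos hlt]
          rw [if_pos hlt, if_pos hlt', hyx]
          ring
        · subst heq'
          rw [if_pos hlt, if_neg (lt_irrefl t), if_neg (show ¬ t < t - τ by linarith), hpT]
          simp only [inner_zero_left, sub_zero, add_zero, zero_add, neg_zero, zero_sub]
      · rw [← heq]
        rw [if_neg (lt_irrefl τ), if_pos hT, sub_self, hδx0]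
        simp only [map_zero, inner_zero_right]
        split_ifs <;> ring
    exact key ▸ hFt
  -- F is constant on [τ, T]
  have hFc : ∀ u ∈ Icc τ T, F u = F τ :=
    constant_of_has_deriv_right_zero
      (fun u hu => (hFd u hu).continuousAt.continuousWithinAt)
      (fun u hu => (hFd u ⟨hu.1, hu.2.le⟩).hasDerivWithinAt)
  have hsplit : ∀ t : ℝ, t ∈ Icc τ T → (∫ s in (t - τ)..t, h s) = H t - H (t - τ) := by
    intro t ht
    have h1 : (0:ℝ) ≤ t - τ := by linarith [ht.1]
    have := intervalIntegral.integral_add_adjacent_intervals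
      (hInt 0 (t - τ) (by linarith) (by linarith))
      (hInt (t - τ) t (by linarith) (by linarith [ht.1]))
    rw [hH_def]
    dsimp only
    linarith [this]
  calc ⟪p t₁, δx t₁⟫ + ∫ s in (t₁ - τ)..t₁, h s = F t₁ := by
        rw [hF_def]; dsimp only; rw [hsplit t₁ ht₁]
    _ = F τ := hFc t₁ ht₁
    _ = F t₂ := (hFc t₂ ht₂).symm
    _ = ⟪p t₂, δx t₂⟫ + ∫ s in (t₂ - τ)..t₂, h s := by
        rw [hF_def]; dsimp only; rw [hsplit t₂ ht₂]
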